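/- The set {f ∈ l∞(ℕ) : AE(f) = +∞} of bounded arithmetic functions with infinite anqie entropy is dense in l∞(ℕ) with respect to the supremum norm. -/

import Mathlib

open Filter Set Topology

namespace Anqie

variable {X : Type*} [TopologicalSpace X]

/-- `𝒰` is an open cover of `X`. -/
def IsOpenCover (𝒰 : Set (Set X)) : Prop :=
  (∀ U ∈ 𝒰, IsOpen U) ∧ ⋃₀ 𝒰 = Set.univ

/-- The common refinement `𝒰 ∨ T⁻¹ 𝒰 ∨ ⋯ ∨ T^{-(n-1)} 𝒰`. -/
def iterJoin (T : X → X) (𝒰 : Set (Set X)) (n : ℕ) : Set (Set X) :=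
  {V | ∃ u : Fin n → Set X, (∀ j, u j ∈ 𝒰) ∧ V = ⋂ j : Fin n, T^[(j : ℕ)] ⁻¹' u j}

/-- The minimal cardinality of a finite subcover of `𝒱` (junk value `0` if none exists). -/
noncomputable def coverNum (𝒱 : Set (Set X)) : ℕ :=
  sInf {k | ∃ F : Finset (Set X), (↑F : Set (Set X)) ⊆ 𝒱 ∧
    ⋃₀ (↑F : Set (Set X)) = Set.univ ∧ F.card = k}

/-- The Adler–Konheim–McAndrew entropy of `T` relative to the open cover `𝒰`. -/
noncomputable def coverEntropy (T : X → X) (𝒰 : Set (Set X)) : EReal :=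
  Filter.atTop.limsup fun n : ℕ =>
    ((Real.log (coverNum (iterJoin T 𝒰 n)) / n : ℝ) : EReal)

/-- The Adler–Konheim–McAndrew topological entropy of `T`, via open covers. -/
noncomputable def entropy (T : X → X) : EReal :=
  ⨆ 𝒰 ∈ {𝒰 : Set (Set X) | IsOpenCover 𝒰}, coverEntropy T 𝒰

/-- The set of forward-orbit sequences of `f : ℕ → X` inside `X^ℕ`. -/
def orbitSet (f : ℕ → X) : Set (ℕ → X) :=
  {ω | ∃ n : ℕ, ∀ k : ℕ, ω k = f (n + k)}

/-- `X_f`, the closure of the set of orbit sequences in the product topology. -/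
def orbitClosure (f : ℕ → X) : Set (ℕ → X) := closure (orbitSet f)

lemma shift_mem_orbitClosure (f : ℕ → X) {ω : ℕ → X} (hω : ω ∈ orbitClosure f) :
    (fun k => ω (k + 1)) ∈ orbitClosure f := by
  have hcont : Continuous fun ω : ℕ → X => fun k => ω (k + 1) :=
    continuous_pi fun k => continuous_apply (k + 1)
  have hmaps : MapsTo (fun ω : ℕ → X => fun k => ω (k + 1)) (orbitSet f) (orbitSet f) := by
    rintro ω ⟨n, hn⟩
    refine ⟨n + 1, fun k => ?_⟩
    show ω (k + 1) = f (n + 1 + k)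
    rw [hn (k + 1)]; congr 1; omega
  exact map_mem_closure hcont hω hmaps

/-- `B_f`, the left shift restricted to `X_f`. -/
def shiftOn (f : ℕ → X) : orbitClosure f → orbitClosure f :=
  fun ω => ⟨fun k => (ω : ℕ → X) (k + 1), shift_mem_orbitClosure f ω.2⟩

/-- The anqie entropy of a map `f : ℕ → X`: the AKM topological entropy of the
left shift on `X_f`. -/
noncomputable def AE (f : ℕ → X) : EReal := entropy (shiftOn f)

end Anqie


namespace AEDense


/-- value encoded by a pair of naturals -/
noncomputable def pval (p : ℕ × ℕ) : ℝ := min ((p.1 : ℝ) / (p.2 + 1)) 1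

/-- the `n`-th word: a padding `0` followed by the decoded list of pairs -/
noncomputable def wl (n : ℕ) : List ℝ :=
  0 :: (Denumerable.ofNat (List (ℕ × ℕ)) n).map pval

lemma wl_length_pos (n : ℕ) : 0 < (wl n).length := by simp [wl]

/-- starting position of the `n`-th word -/
noncomputable def wpos (n : ℕ) : ℕ := ∑ i ∈ Finset.range n, (wl i).length

lemma wpos_lt (n : ℕ) : wpos n < wpos (n + 1) := by
  have : wpos (n+1) = wpos n + (wl n).length := Finset.sum_range_succ _ n
  have h := wl_length_pos n
  omega

lemma wpos_mono : StrictMono wpos := strictMono_nat_of_lt_succ wpos_lt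

lemma lt_wpos_self (k : ℕ) : k < wpos (k + 1) := by
  have : ∀ n, n ≤ wpos n := fun n => by
    induction n with
    | zero => simp
    | succ n ih => have := wpos_lt n; omega
  have := this (k+1); omega

lemma exists_wpos (k : ℕ) : ∃ n, k < wpos (n + 1) := ⟨k, lt_wpos_self k⟩

/-- the universal sequence -/
noncomputable def useq (k : ℕ) : ℝ :=
  (wl (Nat.find (exists_wpos k))).getD (k - wpos (Nat.find (exists_wpos k))) 0

lemma useq_eq (n j : ℕ) (hj : j < (wl n).length) :
    useq (wpos n + j) = (wl n).getD j 0 := by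
  set k := wpos n + j with hk
  have hfind : Nat.find (exists_wpos k) = n := by
    have h1 : k < wpos (n + 1) := by
      have : wpos (n+1) = wpos n + (wl n).length := Finset.sum_range_succ _ n
      omega
    refine le_antisymm (Nat.find_le h1) ?_
    by_contra h
    push_neg at h
    have h2 : Nat.find (exists_wpos k) + 1 ≤ n := h
    have h3 : k < wpos (Nat.find (exists_wpos k) + 1) := Nat.find_spec (exists_wpos k)
    have h4 : wpos (Nat.find (exists_wpos k) + 1) ≤ wpos n := wpos_mono.monotone h2
    omega
  unfold useq
  rw [hfind]
  congr 1
  omega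

lemma useq_mem (k : ℕ) : useq k = 0 ∨ ∃ p : ℕ × ℕ, useq k = pval p := by
  unfold useq
  set n := Nat.find (exists_wpos k)
  set j := k - wpos n
  rcases lt_or_ge j (wl n).length with h | h
  · rw [List.getD_eq_getElem _ _ h]
    have hm : (wl n)[j] ∈ wl n := List.getElem_mem h
    simp only [wl, List.mem_cons, List.mem_map] at hm
    rcases hm with h0 | ⟨p, _, hp⟩
    · left; exact h0
    · right; exact ⟨p, hp.symm⟩
  · left; exact List.getD_eq_default _ _ h

lemma useq_nonneg (k : ℕ) : 0 ≤ useq k := by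
  rcases useq_mem k with h | ⟨p, h⟩
  · rw [h]
  · rw [h]; unfold pval; positivity

lemma useq_le_one (k : ℕ) : useq k ≤ 1 := by
  rcases useq_mem k with h | ⟨p, h⟩
  · rw [h]; norm_num
  · rw [h]; exact min_le_right _ _

/-- every finite word of pair-values occurs in `useq` -/
lemma useq_word (l : List (ℕ × ℕ)) :
    ∃ p : ℕ, ∀ j, (hj : j < l.length) → useq (p + j) = pval l[j] := by
  set n := Encodable.encode l
  have hdec : Denumerable.ofNat (List (ℕ × ℕ)) n = l := Denumerable.ofNat_encode l
  refine ⟨wpos n + 1, fun j hj => ?_⟩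
  have hlen : (wl n).length = l.length + 1 := by simp [wl, hdec]
  have h1 : 1 + j < (wl n).length := by omega
  have := useq_eq n (1 + j) h1
  rw [show wpos n + 1 + j = wpos n + (1 + j) by omega, this]
  rw [show (1+j) = j+1 by omega] at this ⊢
  rw [List.getD_eq_getElem _ _ (by omega : j+1 < (wl n).length)]
  simp only [wl, hdec, List.getElem_cons_succ, List.getElem_map]


open Anqie

/-- the perturbed function: real part snapped to the grid `e·ℤ` plus `(e/2)·useq`,
imaginary part untouched -/
noncomputable def gfun (f : ℕ → ℂ) (e : ℝ) (n : ℕ) : ℂ :=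
  ⟨e * ⌊(f n).re / e⌋ + (e / 2) * useq n, (f n).im⟩

lemma gfun_re (f : ℕ → ℂ) (e : ℝ) (n : ℕ) :
    (gfun f e n).re = e * ⌊(f n).re / e⌋ + (e / 2) * useq n := rfl

lemma gfun_im (f : ℕ → ℂ) (e : ℝ) (n : ℕ) : (gfun f e n).im = (f n).im := rfl

lemma floor_approx {e x : ℝ} (he : 0 < e) : 0 ≤ x - e * ⌊x / e⌋ ∧ x - e * ⌊x / e⌋ < e := by
  have h1 : (⌊x / e⌋ : ℝ) ≤ x / e := Int.floor_le _
  have h2 : x / e < ⌊x / e⌋ + 1 := Int.lt_floor_add_one _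
  have h3 : e * (x / e) = x := by field_simp
  constructor <;> nlinarith

lemma abs_gfun_le {f : ℕ → ℂ} {C : ℝ} (hC : ∀ n, ‖f n‖ ≤ C) {e : ℝ}
    (he : 0 < e) (n : ℕ) : ‖gfun f e n‖ ≤ 2 * C + 2 * e := by
  have h1 := Complex.norm_le_abs_re_add_abs_im (gfun f e n)
  have h2 := floor_approx (x := (f n).re) he
  have h3 := useq_nonneg n
  have h4 := useq_le_one n
  have h5 : |(f n).re| ≤ C := le_trans (Complex.abs_re_le_norm _) (hC n)
  have h6 : |(f n).im| ≤ C := le_trans (Complex.abs_im_le_norm _) (hC n)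
  rw [gfun_re, gfun_im] at *
  rw [abs_le] at h5
  have h7 : |e * ⌊(f n).re / e⌋ + (e / 2) * useq n| ≤ C + e + e / 2 := by
    rw [abs_le]; constructor <;> nlinarith
  have h8 : 0 ≤ C := le_trans (norm_nonneg _) (hC n)
  linarith

section Dyn

variable (f : ℕ → ℂ) (e : ℝ)

lemma isCompact_orbitClosure {f : ℕ → ℂ} {C : ℝ} (hC : ∀ n, ‖f n‖ ≤ C) :
    IsCompact (orbitClosure f) := by
  have hsub : orbitSet f ⊆ Set.pi Set.univ fun _ : ℕ => Metric.closedBall (0 : ℂ) C := by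
    rintro ω ⟨n, hn⟩ k -
    rw [Metric.mem_closedBall, dist_zero_right, hn k]
    exact hC (n + k)
  have hcl : IsClosed (Set.pi Set.univ fun _ : ℕ => Metric.closedBall (0 : ℂ) C) :=
    isClosed_set_pi fun i _ => Metric.isClosed_closedBall
  exact IsCompact.of_isClosed_subset
    (isCompact_univ_pi fun _ => isCompact_closedBall 0 C)
    isClosed_closure (closure_minimal hsub hcl)

lemma continuous_shiftOn : Continuous (shiftOn f) := by
  apply Continuous.subtype_mk
  exact continuous_pi fun k =>
    (continuous_apply (k + 1)).comp continuous_subtype_val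

lemma shiftOn_iterate (ω : orbitClosure f) (j : ℕ) :
    ∀ k, (((shiftOn f)^[j] ω : orbitClosure f) : ℕ → ℂ) k = (ω : ℕ → ℂ) (k + j) := by
  induction j with
  | zero => intro k; rfl
  | succ j ih =>
      intro k
      rw [Function.iterate_succ_apply']
      show (((shiftOn f)^[j] ω : orbitClosure f) : ℕ → ℂ) (k + 1) = _
      rw [ih (k + 1)]
      have : k + 1 + j = k + (j + 1) := by omega
      rw [this]

/-- an orbit point of `X_f` -/
def orbPt (p : ℕ) : orbitClosure f :=
  ⟨fun k => f (p + k), subset_closure ⟨p, fun _ => rfl⟩⟩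

lemma orbPt_iterate (p j : ℕ) :
    (((shiftOn f)^[j] (orbPt f p) : orbitClosure f) : ℕ → ℂ) 0 = f (p + j) := by
  rw [shiftOn_iterate]
  show f (p + (0 + j)) = f (p + j)
  have : p + (0 + j) = p + j := by omega
  rw [this]

end Dyn

section Cover

variable (f : ℕ → ℂ) (e : ℝ) (m : ℕ)

/-- the basic open sets on the real line used for the cover -/
def Ogrid (i : Fin (2 * m + 1)) : Set ℝ :=
  ⋃ k : ℤ, Set.Ioo (e * k + (((i : ℕ) : ℝ) - 1) * (e / (4 * m)))
    (e * k + (((i : ℕ) : ℝ) + 1) * (e / (4 * m)))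

lemma isOpen_Ogrid (i : Fin (2 * m + 1)) : IsOpen (Ogrid e m i) :=
  isOpen_iUnion fun _ => isOpen_Ioo

/-- the "bad set" : reals whose `e`-fract part exceeds `e/2` -/
def badSet : Set ℝ := ⋃ k : ℤ, Set.Ioo (e * k + e / 2) (e * (k + 1))

lemma gfun_re_not_mem_badSet (he : 0 < e) (n : ℕ) : (gfun f e n).re ∉ badSet e := by
  rintro ⟨s, ⟨k, rfl⟩, hs⟩
  simp only [Set.mem_Ioo, gfun_re] at hs
  set K := ⌊(f n).re / e⌋
  have h3 := useq_nonneg n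
  have h4 := useq_le_one n
  -- e*k + e/2 < e*K + (e/2)*u < e*k + e
  rcases le_or_gt K k with h | h
  · have : (K : ℝ) ≤ (k : ℝ) := by exact_mod_cast h
    nlinarith [hs.1]
  · have : (k : ℝ) + 1 ≤ (K : ℝ) := by exact_mod_cast h
    nlinarith [hs.2]

lemma mem_iUnion_Ogrid (he : 0 < e) (hm : 1 ≤ m) {x : ℝ} (hx : x ∉ badSet e) :
    ∃ i : Fin (2 * m + 1), x ∈ Ogrid e m i := by
  set K := ⌊x / e⌋ with hK
  have h0 := floor_approx (x := x) he
  set r := x - e * K with hr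
  have hmr : (0:ℝ) < m := by exact_mod_cast hm
  have hr2 : r ≤ e / 2 := by
    by_contra h
    push_neg at h
    refine hx ⟨_, ⟨K, rfl⟩, Set.mem_Ioo.2 ⟨by nlinarith, by push_cast; nlinarith⟩⟩
  set v := 2 * r / e with hv
  have hv0 : 0 ≤ v := div_nonneg (by linarith) he.le
  have hv1 : v ≤ 1 := by rw [hv, div_le_one he]; linarith
  set i := ⌊2 * (m : ℝ) * v⌋₊ with hi
  have him : (i : ℝ) ≤ 2 * m * v := Nat.floor_le (by positivity)
  have him2 : 2 * (m : ℝ) * v < i + 1 := Nat.lt_floor_add_one _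
  have hile : i ≤ 2 * m := by
    have h2 : (i : ℝ) ≤ 2 * m := by nlinarith
    exact_mod_cast h2
  have hd : (0 : ℝ) < e / (4 * m) := by positivity
  have hcal : 2 * (m : ℝ) * v * (e / (4 * m)) = r := by
    rw [hv]; field_simp; ring
  have hx' : x = e * K + 2 * (m : ℝ) * v * (e / (4 * m)) := by
    rw [hcal, hr]; ring
  refine ⟨⟨i, by omega⟩, Set.mem_iUnion.2 ⟨K, Set.mem_Ioo.2 ⟨?_, ?_⟩⟩⟩
  · show e * K + (((i : ℕ) : ℝ) - 1) * (e / (4 * m)) < x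
    rw [hx']
    have l1 : (((i : ℕ) : ℝ) - 1) * (e / (4 * m)) < 2 * (m : ℝ) * v * (e / (4 * m)) := by
      apply mul_lt_mul_of_pos_right _ hd
      push_cast
      nlinarith
    linarith
  · show x < e * K + (((i : ℕ) : ℝ) + 1) * (e / (4 * m))
    rw [hx']
    have l1 : 2 * (m : ℝ) * v * (e / (4 * m)) < (((i : ℕ) : ℝ) + 1) * (e / (4 * m)) := by
      apply mul_lt_mul_of_pos_right _ hd
      push_cast
      nlinarith
    linarith

lemma separation (he : 0 < e) (hm : 1 ≤ m) {K : ℤ} {b : ℕ} (hb : b < m)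
    {i : Fin (2 * m + 1)}
    (hx : e * K + 2 * b * (e / (4 * m)) ∈ Ogrid e m i) : (i : ℕ) = 2 * b := by
  obtain ⟨s, ⟨k, rfl⟩, hs⟩ := hx
  rw [Set.mem_Ioo] at hs
  have hmr : (0:ℝ) < m := by exact_mod_cast hm
  have hd : (0 : ℝ) < e / (4 * m) := by positivity
  set d := K - k with hdef
  have hKk : (K : ℝ) = (k : ℝ) + (d : ℝ) := by push_cast [hdef]; ring
  have h4d : e * (d : ℝ) = 4 * (m : ℝ) * (d : ℝ) * (e / (4 * m)) := by
    field_simp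
  have step1 : (((i : ℕ) : ℝ) - 1) * (e / (4 * m)) <
      (4 * (m : ℝ) * (d : ℝ) + 2 * b) * (e / (4 * m)) := by
    have h1 := hs.1
    rw [hKk] at h1
    nlinarith [h1, h4d]
  have step2 : (4 * (m : ℝ) * (d : ℝ) + 2 * b) * (e / (4 * m)) <
      (((i : ℕ) : ℝ) + 1) * (e / (4 * m)) := by
    have h1 := hs.2
    rw [hKk] at h1
    nlinarith [h1, h4d]
  have key1 : (((i : ℕ) : ℝ) - 1) < 4 * (m : ℝ) * (d : ℝ) + 2 * b :=
    lt_of_mul_lt_mul_right step1 hd.le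
  have key2 : 4 * (m : ℝ) * (d : ℝ) + 2 * b < ((i : ℕ) : ℝ) + 1 :=
    lt_of_mul_lt_mul_right step2 hd.le
  have hint1 : ((i : ℕ) : ℤ) - 1 < 4 * (m : ℤ) * d + 2 * b := by exact_mod_cast key1
  have hint2 : 4 * (m : ℤ) * d + 2 * b < ((i : ℕ) : ℤ) + 1 := by exact_mod_cast key2
  have hteq : 4 * (m : ℤ) * d + 2 * b = ((i : ℕ) : ℤ) := by omega
  have hibz : ((i : ℕ) : ℤ) ≤ 2 * m := by
    have := i.isLt; omega
  have hbz : (b : ℤ) < m := by exact_mod_cast hb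
  have hmz : (1 : ℤ) ≤ m := by exact_mod_cast hm
  have hd0 : d = 0 := by
    rcases lt_trichotomy d 0 with h | h | h
    · exfalso
      have hmul : 4 * (m : ℤ) * d ≤ 4 * m * (-1) :=
        mul_le_mul_of_nonneg_left (by omega) (by omega)
      have hb0 : (0 : ℤ) ≤ b := Int.natCast_nonneg b
      have hi0 : (0 : ℤ) ≤ ((i : ℕ) : ℤ) := Int.natCast_nonneg _
      linarith
    · exact h
    · exfalso
      have hmul : 4 * (m : ℤ) * 1 ≤ 4 * m * d :=
        mul_le_mul_of_nonneg_left (by omega) (by omega)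
      have hb0 : (0 : ℤ) ≤ b := Int.natCast_nonneg b
      linarith
  rw [hd0] at hteq
  simp at hteq
  omega

end Cover

section Main

variable (f : ℕ → ℂ) (e : ℝ) (m : ℕ)

/-- the open cover of `X_g` -/
def Ucov (i : Fin (2 * m + 1)) : Set ↥(orbitClosure (gfun f e)) :=
  {ω | (((ω : ℕ → ℂ)) 0).re ∈ Ogrid e m i}

lemma continuous_coord0re :
    Continuous fun ω : ↥(orbitClosure (gfun f e)) => ((ω : ℕ → ℂ) 0).re :=
  Complex.continuous_re.comp ((continuous_apply 0).comp continuous_subtype_val)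

lemma isOpen_Ucov (i : Fin (2 * m + 1)) : IsOpen (Ucov f e m i) :=
  (isOpen_Ogrid e m i).preimage (continuous_coord0re f e)

lemma coord0re_not_bad (he : 0 < e) (ω : ↥(orbitClosure (gfun f e))) :
    ((ω : ℕ → ℂ) 0).re ∉ badSet e := by
  have hφ : Continuous fun σ : ℕ → ℂ => (σ 0).re :=
    Complex.continuous_re.comp (continuous_apply 0)
  have hmt : Set.MapsTo (fun σ : ℕ → ℂ => (σ 0).re) (orbitSet (gfun f e))
      {y : ℝ | ∃ n, y = (gfun f e n).re} := by
    rintro σ ⟨n, hn⟩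
    exact ⟨n + 0, by simp [hn 0]⟩
  have h1 : ((ω : ℕ → ℂ) 0).re ∈ closure {y : ℝ | ∃ n, y = (gfun f e n).re} :=
    map_mem_closure (f := fun σ : ℕ → ℂ => (σ 0).re) hφ ω.2 hmt
  have h2 : closure {y : ℝ | ∃ n, y = (gfun f e n).re} ⊆ (badSet e)ᶜ := by
    apply closure_minimal
    · rintro y ⟨n, rfl⟩
      exact gfun_re_not_mem_badSet f e he n
    · exact (isOpen_iUnion fun _ => isOpen_Ioo).isClosed_compl
  exact h2 h1

lemma exists_mem_Ucov (he : 0 < e) (hm : 1 ≤ m) (ω : ↥(orbitClosure (gfun f e))) :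
    ∃ i, ω ∈ Ucov f e m i :=
  mem_iUnion_Ogrid e m he hm (coord0re_not_bad f e he ω)

lemma isOpenCover_Ucov (he : 0 < e) (hm : 1 ≤ m) :
    IsOpenCover (Set.range (Ucov f e m)) := by
  constructor
  · rintro U ⟨i, rfl⟩
    exact isOpen_Ucov f e m i
  · rw [Set.sUnion_range]
    rw [Set.eq_univ_iff_forall]
    intro ω
    obtain ⟨i, hi⟩ := exists_mem_Ucov f e m he hm ω
    exact Set.mem_iUnion.2 ⟨i, hi⟩

lemma isOpenCover_iterJoin {T : ↥(orbitClosure (gfun f e)) → ↥(orbitClosure (gfun f e))}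
    (hT : Continuous T) {𝒰 : Set (Set ↥(orbitClosure (gfun f e)))}
    (h𝒰 : IsOpenCover 𝒰) (n : ℕ) : IsOpenCover (iterJoin T 𝒰 n) := by
  constructor
  · rintro V ⟨uu, huu, rfl⟩
    exact isOpen_iInter_of_finite fun j =>
      (h𝒰.1 _ (huu j)).preimage (hT.iterate _)
  · rw [Set.eq_univ_iff_forall]
    intro x
    have : ∀ j : Fin n, ∃ U ∈ 𝒰, T^[(j : ℕ)] x ∈ U := by
      intro j
      have := h𝒰.2
      have hx : T^[(j : ℕ)] x ∈ ⋃₀ 𝒰 := by rw [this]; trivial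
      exact hx
    choose uu huu hxu using this
    exact ⟨_, ⟨uu, huu, rfl⟩, Set.mem_iInter.2 fun j => hxu j⟩

lemma coverNum_set_nonempty {𝒱 : Set (Set ↥(orbitClosure (gfun f e)))}
    (hcpt : CompactSpace ↥(orbitClosure (gfun f e))) (hV : IsOpenCover 𝒱) :
    {k | ∃ F : Finset (Set ↥(orbitClosure (gfun f e))),
      (↑F : Set (Set ↥(orbitClosure (gfun f e)))) ⊆ 𝒱 ∧ ⋃₀ (↑F : Set (Set ↥(orbitClosure (gfun f e)))) = Set.univ ∧ F.card = k}.Nonempty := by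
  classical
  obtain ⟨t, ht⟩ := IsCompact.elim_finite_subcover (isCompact_univ)
    (fun v : 𝒱 => (v : Set ↥(orbitClosure (gfun f e)))) (fun v => hV.1 v v.2)
    (by rw [← Set.sUnion_eq_iUnion, hV.2])
  refine ⟨(t.image Subtype.val).card, t.image Subtype.val, ?_, ?_, rfl⟩
  · intro V hV'
    simp only [Finset.coe_image, Set.mem_image] at hV'
    obtain ⟨v, _, rfl⟩ := hV'
    exact v.2
  · apply Set.eq_univ_of_univ_subset
    refine ht.trans ?_
    intro x hx
    simp only [Set.mem_iUnion] at hx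
    obtain ⟨v, hv, hxv⟩ := hx
    refine ⟨v, ?_, hxv⟩
    simp only [Finset.coe_image, Set.mem_image, Finset.mem_coe]
    exact ⟨v, hv, rfl⟩

lemma useq_word' (hm : 1 ≤ m) (n : ℕ) (w : Fin n → Fin m) :
    ∃ p : ℕ, ∀ j : Fin n, useq (p + (j : ℕ)) = ((w j : ℕ) : ℝ) / m := by
  obtain ⟨p, hp⟩ := useq_word (List.ofFn fun j : Fin n => (((w j : ℕ)), m - 1))
  refine ⟨p, fun j => ?_⟩
  have hj : (j : ℕ) < (List.ofFn fun j : Fin n => (((w j : ℕ)), m - 1)).length := by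
    rw [List.length_ofFn]; exact j.isLt
  rw [hp (j : ℕ) hj]
  have hel : (List.ofFn fun j : Fin n => (((w j : ℕ)), m - 1))[(j : ℕ)] = ((w j : ℕ), m - 1) := by
    simp [List.getElem_ofFn]
  rw [hel]
  unfold pval
  have hm1 : ((m : ℕ) - 1 + 1 : ℕ) = m := by omega
  have hcast : ((m - 1 : ℕ) : ℝ) + 1 = (m : ℝ) := by
    rw [show ((m : ℕ) : ℝ) = (((m - 1 : ℕ) + 1 : ℕ) : ℝ) by rw [hm1]]
    push_cast
    ring
  simp only [hcast]
  apply min_eq_left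
  rw [div_le_one (by exact_mod_cast Nat.lt_of_lt_of_le Nat.zero_lt_one hm)]
  exact_mod_cast le_of_lt (w j).isLt

lemma re_gfun_grid (he : 0 < e) (hm : 1 ≤ m) (q : ℕ) {b : ℕ} (hb : useq q = (b : ℝ) / m) :
    (gfun f e q).re = e * ⌊(f q).re / e⌋ + 2 * b * (e / (4 * m)) := by
  rw [gfun_re, hb]
  have hmr : (0:ℝ) < m := by exact_mod_cast hm
  field_simp
  ring

lemma card_ge_of_subcover (he : 0 < e) (hm : 1 ≤ m) (n : ℕ)
    {F : Finset (Set ↥(orbitClosure (gfun f e)))}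
    (hF1 : (↑F : Set (Set ↥(orbitClosure (gfun f e)))) ⊆ iterJoin (shiftOn (gfun f e)) (Set.range (Ucov f e m)) n)
    (hF2 : ⋃₀ (↑F : Set (Set ↥(orbitClosure (gfun f e)))) = Set.univ) : m ^ n ≤ F.card := by
  choose pfun hpfun using useq_word' m hm n
  have hVex : ∀ w : Fin n → Fin m, ∃ V ∈ F, orbPt (gfun f e) (pfun w) ∈ V := by
    intro w
    have : orbPt (gfun f e) (pfun w) ∈ ⋃₀ (↑F : Set (Set ↥(orbitClosure (gfun f e)))) := by rw [hF2]; trivial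
    obtain ⟨V, hVF, hVx⟩ := this
    exact ⟨V, hVF, hVx⟩
  choose Vf hVmem hVpt using hVex
  have hinj : Function.Injective Vf := by
    intro w w' hww
    obtain ⟨uu, huu, hVeq⟩ := hF1 (hVmem w)
    have hiex : ∀ j : Fin n, ∃ i : Fin (2 * m + 1), uu j = Ucov f e m i := fun j =>
      (Set.mem_range.1 (huu j)).imp fun i h => h.symm
    choose iFun hiFun using hiex
    have hz : ∀ z : Fin n → Fin m, Vf z = Vf w → ∀ j : Fin n, (iFun j : ℕ) = 2 * (z j : ℕ) := by
      intro z hzw j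
      have hmem : orbPt (gfun f e) (pfun z) ∈ Vf w := by rw [← hzw]; exact hVpt z
      rw [hVeq] at hmem
      have hj := Set.mem_iInter.1 hmem j
      rw [hiFun j] at hj
      have hj' : (((shiftOn (gfun f e))^[(j : ℕ)]
          (orbPt (gfun f e) (pfun z)) : ↥(orbitClosure (gfun f e))) : ℕ → ℂ) 0 =
          gfun f e (pfun z + (j : ℕ)) := orbPt_iterate _ _ _
      have hre : (gfun f e (pfun z + (j : ℕ))).re =
          e * ⌊(f (pfun z + (j : ℕ))).re / e⌋ + 2 * (z j : ℕ) * (e / (4 * m)) :=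
        re_gfun_grid f e m he hm _ (hpfun z j)
      have hmem2 : (gfun f e (pfun z + (j : ℕ))).re ∈ Ogrid e m (iFun j) := by
        have : hj.out = hj.out := rfl
        simpa [Ucov, hj'] using hj
      rw [hre] at hmem2
      exact separation e m he hm (z j).isLt hmem2
    funext j
    have h1 := hz w rfl j
    have h2 := hz w' hww.symm j
    have : (w j : ℕ) = (w' j : ℕ) := by omega
    exact Fin.ext this
  calc m ^ n = Fintype.card (Fin n → Fin m) := by simp
    _ ≤ Fintype.card {V // V ∈ F} :=
        Fintype.card_le_of_injective (fun w => ⟨Vf w, hVmem w⟩)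
          (fun a b h => hinj (congrArg Subtype.val h))
    _ = F.card := Fintype.card_coe F

lemma coverNum_ge (hcpt : CompactSpace ↥(orbitClosure (gfun f e)))
    (he : 0 < e) (hm : 1 ≤ m) (n : ℕ) :
    m ^ n ≤ coverNum (iterJoin (shiftOn (gfun f e)) (Set.range (Ucov f e m)) n) := by
  have hoc := isOpenCover_iterJoin f e (continuous_shiftOn (gfun f e))
    (isOpenCover_Ucov f e m he hm) n
  have hne := coverNum_set_nonempty f e hcpt hoc
  have hmem := Nat.sInf_mem hne
  obtain ⟨F, hF1, hF2, hF3⟩ := hmem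
  rw [coverNum, ← hF3]
  exact card_ge_of_subcover f e m he hm n hF1 hF2

end Main

section Entropy

variable (f : ℕ → ℂ) (e : ℝ) (m : ℕ)

lemma coverEntropy_ge (hcpt : CompactSpace ↥(orbitClosure (gfun f e)))
    (he : 0 < e) (hm : 1 ≤ m) :
    ((Real.log m : ℝ) : EReal) ≤
      coverEntropy (shiftOn (gfun f e)) (Set.range (Ucov f e m)) := by
  apply Filter.le_limsup_of_frequently_le
  · refine Filter.Eventually.frequently ?_
    filter_upwards [Filter.eventually_ge_atTop 1] with n hn
    rw [EReal.coe_le_coe_iff]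
    set N := coverNum (iterJoin (shiftOn (gfun f e)) (Set.range (Ucov f e m)) n) with hN
    have hc : ((m : ℝ)) ^ n ≤ (N : ℝ) := by
      exact_mod_cast coverNum_ge f e m hcpt he hm n
    have hm0 : (0 : ℝ) < (m : ℝ) := by exact_mod_cast hm
    have hpos : (0 : ℝ) < (m : ℝ) ^ n := by positivity
    have hlog : Real.log ((m : ℝ) ^ n) ≤ Real.log N := Real.log_le_log hpos hc
    rw [Real.log_pow] at hlog
    have hn0 : (0 : ℝ) < (n : ℝ) := by exact_mod_cast hn
    rw [le_div_iff₀ hn0]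
    nlinarith
  · exact Filter.isBoundedUnder_of ⟨⊤, fun x => le_top⟩

lemma AE_gfun_top {C : ℝ} (hC : ∀ n, ‖f n‖ ≤ C) (he : 0 < e) :
    AE (gfun f e) = ⊤ := by
  have hcpt : CompactSpace ↥(orbitClosure (gfun f e)) :=
    isCompact_iff_compactSpace.mp (isCompact_orbitClosure (abs_gfun_le hC he))
  have hge : ∀ m : ℕ, 1 ≤ m → ((Real.log m : ℝ) : EReal) ≤ AE (gfun f e) := by
    intro m hm
    refine le_trans (coverEntropy_ge f e m hcpt he hm) ?_
    exact le_iSup₂ (f := fun 𝒰 (_ : 𝒰 ∈ {𝒰 : Set (Set ↥(orbitClosure (gfun f e))) |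
      IsOpenCover 𝒰}) => coverEntropy (shiftOn (gfun f e)) 𝒰)
      (Set.range (Ucov f e m)) (isOpenCover_Ucov f e m he hm)
  by_contra ha
  have hlt : AE (gfun f e) < ⊤ := lt_top_iff_ne_top.2 ha
  obtain ⟨r, hr1, _⟩ := EReal.exists_between_coe_real hlt
  set M := max 1 ⌈Real.exp r⌉₊ with hM
  have hM1 : 1 ≤ M := le_max_left _ _
  have hMr : r ≤ Real.log M := by
    have h1 : Real.exp r ≤ (M : ℝ) := by
      refine le_trans (Nat.le_ceil _) ?_
      exact_mod_cast le_max_right 1 ⌈Real.exp r⌉₊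
    calc r = Real.log (Real.exp r) := (Real.log_exp r).symm
      _ ≤ Real.log M := Real.log_le_log (Real.exp_pos r) h1
  have := hge M hM1
  have : (r : EReal) ≤ AE (gfun f e) :=
    le_trans (EReal.coe_le_coe_iff.2 hMr) this
  exact absurd (lt_of_le_of_lt this hr1) (lt_irrefl _)

end Entropy

end AEDense

/-- The set of bounded arithmetic functions with infinite anqie
entropy is dense in `l∞(ℕ)` (bounded functions `ℕ → ℂ` with the sup norm). -/
theorem dense_infinite_anqie_entropy :
    Dense {f : BoundedContinuousFunction ℕ ℂ | Anqie.AE ⇑f = ⊤} := by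
  rw [Metric.dense_iff]
  intro F r hr
  set e := r / 2 with he'
  have he : 0 < e := by positivity
  have hC : ∀ n, ‖F n‖ ≤ ‖F‖ := fun n => by
    exact F.norm_coe_le_norm n
  have hbd := AEDense.abs_gfun_le hC he
  have hb : ∀ x y : ℕ, dist (AEDense.gfun (⇑F) e x) (AEDense.gfun (⇑F) e y) ≤
      2 * (2 * ‖F‖ + 2 * e) := by
    intro x y
    rw [Complex.dist_eq]
    refine (norm_sub_le _ _).trans ?_
    linarith [hbd x, hbd y]
  set G : BoundedContinuousFunction ℕ ℂ :=
    BoundedContinuousFunction.mkOfBound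
      ⟨AEDense.gfun (⇑F) e, continuous_of_discreteTopology⟩ _ hb with hG
  have hGcoe : ⇑G = AEDense.gfun (⇑F) e := rfl
  refine ⟨G, ?_, ?_⟩
  · rw [Metric.mem_ball]
    have hd : dist G F ≤ e := by
      rw [BoundedContinuousFunction.dist_le he.le]
      intro n
      have hGn : G n = AEDense.gfun (⇑F) e n := rfl
      rw [hGn, Complex.dist_eq]
      have h2 := AEDense.floor_approx (x := (F n).re) he
      have h3 := AEDense.useq_nonneg n
      have h4 := AEDense.useq_le_one n
      have him : (AEDense.gfun (⇑F) e n - F n).im = 0 := by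
        rw [Complex.sub_im, AEDense.gfun_im, sub_self]
      have hre : (AEDense.gfun (⇑F) e n - F n).re =
          e * ⌊(F n).re / e⌋ + (e / 2) * AEDense.useq n - (F n).re := by
        rw [Complex.sub_re, AEDense.gfun_re]
      have habs : ‖AEDense.gfun (⇑F) e n - F n‖ ≤
          |(AEDense.gfun (⇑F) e n - F n).re| + |(AEDense.gfun (⇑F) e n - F n).im| := by
        exact Complex.norm_le_abs_re_add_abs_im _
      refine le_trans habs ?_
      rw [him, hre, abs_zero, add_zero, abs_le]
      constructor <;> nlinarith
    calc dist G F ≤ e := hd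
      _ < r := by rw [he']; linarith
  · show Anqie.AE ⇑G = ⊤
    rw [hGcoe]
    exact AEDense.AE_gfun_top (⇑F) e hC he
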